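/- Let $(X,\mathcal{X},\mu,T)$ be an invertible measure preserving system, $f_0, f_1 \in L^\infty(\mu)$ bounded by 1, $\alpha$ irrational, and $b: \mathbb{N}\to\mathbb{C}$ a sequence with $b(n)/n^c\to 0$ for all $c>0$. Let $\xi: [0,1)\to[-1,1]$ be supported in an interval $I \subset (0,1)$ of length at most $1/2$. Then $\left\|\frac{1}{N}\sum_{n=1}^{N}b(n)\xi(\{n\alpha\})\, f_0\cdot T^{\lfloor n\alpha\rfloor}f_1\right\|_{L^2(\mu)} \leq C\left(\|b(n)\xi(\{n\alpha\})\mathbf{1}_{[1,N]}\|_{U^2(\mathbb{Z}_{2N})} + o_N(1)\right)$, where $C$ is an absolute constant and the $o_N(1)$ term depends only on $b$. -/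

import Mathlib

open Filter MeasureTheory
open scoped ENNReal

/-- The Gowers uniformity norm `U^d` on `ℤ/Nℤ`, for functions given on the
representatives `{0,…,N-1}` (addition taken mod `N`). The value at `d = 0` is junk. -/
noncomputable def gowersNormNat (N : ℕ) : ℕ → (ℕ → ℂ) → ℝ
  | 0, _ => 0
  | 1, a => ‖(∑ n ∈ Finset.range N, a n) / (N : ℂ)‖
  | (d + 2), a =>
      ((∑ h ∈ Finset.range N,
        (gowersNormNat N (d + 1) (fun n => a ((n + h) % N) * (starRingEnd ℂ) (a (n % N))))
          ^ (2 ^ (d + 1))) / (N : ℝ)) ^ (((2 : ℝ) ^ (d + 2))⁻¹)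

/-! ### Auxiliary lemmas -/

set_option maxHeartbeats 1000000

lemma floor_diff_const' {α p q : ℝ} (hpq : q - p ≤ 1/2) {n m : ℤ}
    (hn : Int.fract ((n:ℝ) * α) ∈ Set.Ioo p q) (hm : Int.fract ((m:ℝ) * α) ∈ Set.Ioo p q) :
    ⌊(n:ℝ) * α⌋ = ⌊(m:ℝ) * α⌋ + ⌊((n - m : ℤ) : ℝ) * α + 1/2⌋ := by
  obtain ⟨hn1, hn2⟩ := hn
  obtain ⟨hm1, hm2⟩ := hm
  have h1 : ((n - m : ℤ) : ℝ) * α + 1/2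
      = ((⌊(n:ℝ)*α⌋ - ⌊(m:ℝ)*α⌋ : ℤ) : ℝ)
        + (Int.fract ((n:ℝ)*α) - Int.fract ((m:ℝ)*α) + 1/2) := by
    simp only [Int.fract]
    push_cast
    ring
  have h2 : ⌊((n - m : ℤ) : ℝ) * α + 1/2⌋ = ⌊(n:ℝ)*α⌋ - ⌊(m:ℝ)*α⌋ := by
    rw [h1]
    rw [Int.floor_eq_iff (z := ⌊(n:ℝ)*α⌋ - ⌊(m:ℝ)*α⌋)]
    push_cast
    constructor <;> nlinarith
  omega

lemma sum_ext_zero' {M : Type*} [AddCommMonoid M] {I : Finset ℤ} (g : ℤ → M)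
    (hg : ∀ k, k ∉ I → g k = 0) {s : Finset ℤ} (hs : I ⊆ s) :
    ∑ k ∈ s, g k = ∑ k ∈ I, g k :=
  (Finset.sum_subset hs fun x _ hx => hg x hx).symm

lemma sum_range_int' {M : Type*} [AddCommMonoid M] (N : ℕ) (F : ℤ → M) :
    ∑ d ∈ Finset.Icc (0:ℤ) ((N:ℤ)-1), F d = ∑ h ∈ Finset.range N, F (h:ℤ) := by
  refine Finset.sum_nbij' (fun d => d.toNat) (fun h => (h:ℤ)) ?_ ?_ ?_ ?_ ?_ <;>
      intro a ha <;> simp only [Finset.mem_Icc, Finset.mem_range] at *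
  · omega
  · omega
  · omega
  · omega
  · congr 1; omega

lemma sum_Icc_int_nat {M : Type*} [AddCommMonoid M] (N : ℕ) (F : ℤ → M) :
    ∑ k ∈ Finset.Icc (1:ℤ) (N:ℤ), F k = ∑ n ∈ Finset.Icc 1 N, F (n:ℤ) := by
  refine Finset.sum_nbij' (fun d => d.toNat) (fun h => (h:ℤ)) ?_ ?_ ?_ ?_ ?_ <;>
      intro a ha <;> simp only [Finset.mem_Icc] at *
  · omega
  · omega
  · omega
  · omega
  · congr 1; omega

lemma vdc_csymm' {E : Type*} [NormedAddCommGroup E] [InnerProductSpace ℂ E]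
    (N : ℕ) (v : ℤ → E)
    (hv : ∀ k : ℤ, k ∉ Finset.Icc (1:ℤ) (N:ℤ) → v k = 0) (d : ℤ) :
    ‖∑ n ∈ Finset.Icc (1:ℤ) (N:ℤ), (inner ℂ (v (n + -d)) (v n) : ℂ)‖
      = ‖∑ n ∈ Finset.Icc (1:ℤ) (N:ℤ), (inner ℂ (v (n + d)) (v n) : ℂ)‖ := by
  classical
  set I : Finset ℤ := Finset.Icc (1:ℤ) (N:ℤ) with hIdef
  have h1 : (starRingEnd ℂ) (∑ n ∈ I, (inner ℂ (v (n + d)) (v n) : ℂ))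
      = ∑ n ∈ I, (inner ℂ (v n) (v (n + d)) : ℂ) := by
    rw [map_sum]
    exact Finset.sum_congr rfl fun n _ => inner_conj_symm _ _
  have h2 : ∑ n ∈ I, (inner ℂ (v n) (v (n + d)) : ℂ)
      = ∑ n ∈ I.filter (fun n => n + d ∈ I), (inner ℂ (v n) (v (n + d)) : ℂ) := by
    refine (Finset.sum_subset (Finset.filter_subset _ _) ?_).symm
    intro n hn hn'
    have : n + d ∉ I := by
      intro h; exact hn' (Finset.mem_filter.2 ⟨hn, h⟩)
    rw [hv _ this, inner_zero_right]
  have h3 : ∑ n ∈ I, (inner ℂ (v (n + -d)) (v n) : ℂ)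
      = ∑ n ∈ I.filter (fun n => n + -d ∈ I), (inner ℂ (v (n + -d)) (v n) : ℂ) := by
    refine (Finset.sum_subset (Finset.filter_subset _ _) ?_).symm
    intro n hn hn'
    have : n + -d ∉ I := by
      intro h; exact hn' (Finset.mem_filter.2 ⟨hn, h⟩)
    rw [hv _ this, inner_zero_left]
  have h4 : ∑ n ∈ I.filter (fun n => n + d ∈ I), (inner ℂ (v n) (v (n + d)) : ℂ)
      = ∑ k ∈ I.filter (fun k => k + -d ∈ I), (inner ℂ (v (k + -d)) (v k) : ℂ) := by
    refine Finset.sum_nbij' (fun n => n + d) (fun k => k + -d) ?_ ?_ ?_ ?_ ?_ <;>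
        intro a ha <;>
      simp only [Finset.mem_filter, hIdef, Finset.mem_Icc] at *
    · omega
    · omega
    · omega
    · omega
    · have : a + d + -d = a := by ring
      rw [this]
  rw [h3, ← h4, ← h2, ← h1, Complex.norm_conj]

/-- Finite van der Corput inequality in a complex inner product space. -/
lemma vdc_core' {E : Type*} [NormedAddCommGroup E] [InnerProductSpace ℂ E]
    (N : ℕ) (hN : 0 < N) (v : ℤ → E)
    (hv : ∀ k : ℤ, k ∉ Finset.Icc (1:ℤ) (N:ℤ) → v k = 0) :
    (N:ℝ)^2 * ‖∑ k ∈ Finset.Icc (1:ℤ) (N:ℤ), v k‖ ^ 2 ≤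
      4 * (N:ℝ)^2 * ∑ h ∈ Finset.range N,
        ‖∑ n ∈ Finset.Icc (1:ℤ) (N:ℤ), (inner ℂ (v (n + (h:ℤ))) (v n) : ℂ)‖ := by
  classical
  set I : Finset ℤ := Finset.Icc (1:ℤ) (N:ℤ) with hIdef
  set W : Finset ℤ := Finset.Icc (2 - (N:ℤ)) (N:ℤ) with hWdef
  set c : ℤ → ℂ := fun d => ∑ n ∈ I, (inner ℂ (v (n + d)) (v n) : ℂ) with hcdef
  set S : E := ∑ k ∈ I, v k with hSdef
  have hIW : ∀ m : ℤ, 0 ≤ m → m ≤ (N:ℤ) - 1 → I ⊆ Finset.Icc (2 - (N:ℤ) + m) ((N:ℤ) + m) := by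
    intro m h0 h1
    intro k hk
    simp only [hIdef, Finset.mem_Icc] at *
    omega
  have creindex : ∀ (d : ℤ) (s : Finset ℤ), I ⊆ s →
      ∑ n ∈ s, (inner ℂ (v (n + d)) (v n) : ℂ) = c d := by
    intro d s hs
    refine sum_ext_zero' _ ?_ hs
    intro k hk; rw [hv k hk, inner_zero_right]
  set y : ℤ → E := fun n => ∑ m ∈ Finset.range N, v (n + (m:ℤ)) with hydef
  have stepA : (N:ℝ) • S = ∑ n ∈ W, y n := by
    have : ∑ n ∈ W, y n = ∑ m ∈ Finset.range N, ∑ n ∈ W, v (n + (m:ℤ)) := by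
      rw [hydef]; exact Finset.sum_comm
    rw [this]
    have hm : ∀ m ∈ Finset.range N, ∑ n ∈ W, v (n + (m:ℤ)) = S := by
      intro m hm
      rw [Finset.mem_range] at hm
      have h1 : ∑ n ∈ W, v (n + (m:ℤ)) = ∑ k ∈ W.map (addRightEmbedding (m:ℤ)), v k := by
        rw [Finset.sum_map]
        exact Finset.sum_congr rfl fun n _ => by simp [addRightEmbedding_apply]
      rw [h1, hWdef, Finset.map_add_right_Icc]
      exact sum_ext_zero' v hv (hIW m (by positivity) (by omega))
    rw [Finset.sum_congr rfl hm, Finset.sum_const, Finset.card_range]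
    rw [← Nat.cast_smul_eq_nsmul ℝ]
  have cardW : (W.card : ℝ) ≤ 2 * N := by
    have : W.card = (2 * N - 1 : ℕ) := by
      rw [hWdef, Int.card_Icc]
      omega
    rw [this]
    calc ((2*N-1:ℕ):ℝ) ≤ ((2*N:ℕ):ℝ) := Nat.cast_le.mpr (Nat.sub_le _ _)
      _ = 2*N := by push_cast; ring
  have stepB : ((N:ℝ) * ‖S‖)^2 ≤ (2*(N:ℝ)) * ∑ n ∈ W, ‖y n‖^2 := by
    have h1 : (N:ℝ) * ‖S‖ = ‖∑ n ∈ W, y n‖ := by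
      rw [← stepA, norm_smul, Real.norm_natCast]
    have h2 : ‖∑ n ∈ W, y n‖ ≤ ∑ n ∈ W, ‖y n‖ := norm_sum_le _ _
    have h3 : (∑ n ∈ W, ‖y n‖)^2 ≤ (∑ n ∈ W, (1:ℝ)^2) * ∑ n ∈ W, ‖y n‖^2 := by
      have := Finset.sum_mul_sq_le_sq_mul_sq W (fun _ => (1:ℝ)) (fun n => ‖y n‖)
      simpa using this
    have h4 : (∑ n ∈ W, (1:ℝ)^2) = (W.card : ℝ) := by simp
    calc ((N:ℝ) * ‖S‖)^2 = ‖∑ n ∈ W, y n‖^2 := by rw [h1]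
      _ ≤ (∑ n ∈ W, ‖y n‖)^2 := by
          apply pow_le_pow_left₀ (norm_nonneg _) h2
      _ ≤ (W.card : ℝ) * ∑ n ∈ W, ‖y n‖^2 := by rw [← h4]; exact h3
      _ ≤ (2*(N:ℝ)) * ∑ n ∈ W, ‖y n‖^2 := by
          apply mul_le_mul_of_nonneg_right cardW
          positivity
  have stepC : ∑ n ∈ W, ‖y n‖^2
      ≤ ∑ m ∈ Finset.range N, ∑ m' ∈ Finset.range N, ‖c ((m:ℤ) - (m':ℤ))‖ := by
    have hyn : ∀ n : ℤ, (‖y n‖:ℝ)^2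
        = (∑ m' ∈ Finset.range N, ∑ m ∈ Finset.range N,
            (inner ℂ (v (n + (m:ℤ))) (v (n + (m':ℤ))) : ℂ)).re := by
      intro n
      rw [← inner_self_eq_norm_sq (𝕜 := ℂ) (y n)]
      simp only [hydef, inner_sum, sum_inner, RCLike.re_to_complex]
    have hswap : ∑ n ∈ W, ‖y n‖^2
        = (∑ m' ∈ Finset.range N, ∑ m ∈ Finset.range N, c ((m:ℤ) - (m':ℤ))).re := by
      rw [Finset.sum_congr rfl fun n _ => hyn n, ← Complex.re_sum]
      congr 1
      rw [Finset.sum_comm]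
      refine Finset.sum_congr rfl fun m' hm' => ?_
      rw [Finset.sum_comm]
      refine Finset.sum_congr rfl fun m hm => ?_
      rw [Finset.mem_range] at hm'
      have h5 : ∀ n : ℤ, (inner ℂ (v (n + (m:ℤ))) (v (n + (m':ℤ))) : ℂ)
          = inner ℂ (v ((n + (m':ℤ)) + ((m:ℤ) - (m':ℤ)))) (v (n + (m':ℤ))) := by
        intro n; congr 2; ring
      rw [Finset.sum_congr rfl fun n _ => h5 n]
      have h6 : ∑ n ∈ W, (inner ℂ (v ((n + (m':ℤ)) + ((m:ℤ) - (m':ℤ)))) (v (n + (m':ℤ))) : ℂ)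
          = ∑ k ∈ W.map (addRightEmbedding (m':ℤ)),
              (inner ℂ (v (k + ((m:ℤ) - (m':ℤ)))) (v k) : ℂ) := by
        rw [Finset.sum_map]
        exact Finset.sum_congr rfl fun n _ => by simp [addRightEmbedding_apply]
      rw [h6, hWdef, Finset.map_add_right_Icc]
      exact creindex _ _ (hIW m' (by positivity) (by omega))
    rw [hswap]
    calc (∑ m' ∈ Finset.range N, ∑ m ∈ Finset.range N, c ((m:ℤ) - (m':ℤ))).re
        ≤ ‖∑ m' ∈ Finset.range N, ∑ m ∈ Finset.range N, c ((m:ℤ) - (m':ℤ))‖ :=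
          Complex.re_le_norm _
      _ ≤ ∑ m' ∈ Finset.range N, ‖∑ m ∈ Finset.range N, c ((m:ℤ) - (m':ℤ))‖ :=
          norm_sum_le _ _
      _ ≤ ∑ m' ∈ Finset.range N, ∑ m ∈ Finset.range N, ‖c ((m:ℤ) - (m':ℤ))‖ := by
          exact Finset.sum_le_sum fun m' _ => norm_sum_le _ _
      _ = ∑ m ∈ Finset.range N, ∑ m' ∈ Finset.range N, ‖c ((m:ℤ) - (m':ℤ))‖ :=
          Finset.sum_comm
  have stepD : ∀ m ∈ Finset.range N,
      ∑ m' ∈ Finset.range N, ‖c ((m:ℤ) - (m':ℤ))‖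
        ≤ ∑ d ∈ Finset.Icc (1-(N:ℤ)) ((N:ℤ)-1), ‖c d‖ := by
    intro m hm
    rw [Finset.mem_range] at hm
    have himg : ∑ m' ∈ Finset.range N, ‖c ((m:ℤ) - (m':ℤ))‖
        = ∑ d ∈ (Finset.range N).image (fun m' : ℕ => (m:ℤ) - (m':ℤ)), ‖c d‖ := by
      have hinj : ∀ x ∈ Finset.range N, ∀ y ∈ Finset.range N,
          (m:ℤ) - (x:ℤ) = (m:ℤ) - (y:ℤ) → x = y := by
        intro x _ y _ h; omega
      exact (Finset.sum_image (f := fun d => ‖c d‖) hinj).symm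
    rw [himg]
    apply Finset.sum_le_sum_of_subset_of_nonneg
    · intro d hd
      simp only [Finset.mem_image, Finset.mem_range] at hd
      obtain ⟨m', hm', rfl⟩ := hd
      simp only [Finset.mem_Icc]
      omega
    · intro _ _ _
      exact norm_nonneg _
  have stepE : ∑ d ∈ Finset.Icc (1-(N:ℤ)) ((N:ℤ)-1), ‖c d‖
      ≤ 2 * ∑ h ∈ Finset.range N, ‖c (h:ℤ)‖ := by
    have hsplit : Finset.Icc (1-(N:ℤ)) ((N:ℤ)-1)
        = Finset.Icc (1-(N:ℤ)) (-1) ∪ Finset.Icc (0:ℤ) ((N:ℤ)-1) := by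
      ext d
      simp only [Finset.mem_union, Finset.mem_Icc]
      omega
    have hdisj : Disjoint (Finset.Icc (1-(N:ℤ)) (-1)) (Finset.Icc (0:ℤ) ((N:ℤ)-1)) := by
      rw [Finset.disjoint_left]
      intro d hd hd'
      simp only [Finset.mem_Icc] at *
      omega
    rw [hsplit, Finset.sum_union hdisj]
    have hpos : ∑ d ∈ Finset.Icc (0:ℤ) ((N:ℤ)-1), ‖c d‖
        = ∑ h ∈ Finset.range N, ‖c (h:ℤ)‖ := sum_range_int' N _
    have hneg : ∑ d ∈ Finset.Icc (1-(N:ℤ)) (-1), ‖c d‖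
        ≤ ∑ h ∈ Finset.range N, ‖c (h:ℤ)‖ := by
      have h7 : ∑ d ∈ Finset.Icc (1-(N:ℤ)) (-1), ‖c d‖
          = ∑ d ∈ Finset.Icc (1:ℤ) ((N:ℤ)-1), ‖c (-d)‖ := by
        refine Finset.sum_nbij' (fun d => -d) (fun d => -d) ?_ ?_ ?_ ?_ ?_ <;>
            intro a ha <;> simp only [Finset.mem_Icc] at * <;>
          first
          | omega
          | rw [neg_neg]
      rw [h7]
      have h8 : ∀ d ∈ Finset.Icc (1:ℤ) ((N:ℤ)-1), ‖c (-d)‖ = ‖c d‖ := by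
        intro d _
        have := vdc_csymm' N v hv d
        simpa [hcdef] using this
      rw [Finset.sum_congr rfl h8]
      have h9 : ∑ d ∈ Finset.Icc (1:ℤ) ((N:ℤ)-1), ‖c d‖
          ≤ ∑ d ∈ Finset.Icc (0:ℤ) ((N:ℤ)-1), ‖c d‖ := by
        apply Finset.sum_le_sum_of_subset_of_nonneg
        · intro d hd; simp only [Finset.mem_Icc] at *; omega
        · intro _ _ _; exact norm_nonneg _
      rw [hpos] at h9
      exact h9
    linarith
  have hfinal : ((N:ℝ) * ‖S‖)^2
      ≤ (2*(N:ℝ)) * ((N:ℝ) * (2 * ∑ h ∈ Finset.range N, ‖c (h:ℤ)‖)) := by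
    refine le_trans stepB (mul_le_mul_of_nonneg_left ?_ (by positivity))
    refine le_trans stepC ?_
    calc ∑ m ∈ Finset.range N, ∑ m' ∈ Finset.range N, ‖c ((m:ℤ) - (m':ℤ))‖
        ≤ ∑ m ∈ Finset.range N, ∑ d ∈ Finset.Icc (1-(N:ℤ)) ((N:ℤ)-1), ‖c d‖ :=
          Finset.sum_le_sum stepD
      _ = (N:ℝ) * ∑ d ∈ Finset.Icc (1-(N:ℤ)) ((N:ℤ)-1), ‖c d‖ := by
          rw [Finset.sum_const, Finset.card_range, nsmul_eq_mul]
      _ ≤ (N:ℝ) * (2 * ∑ h ∈ Finset.range N, ‖c (h:ℤ)‖) := by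
          apply mul_le_mul_of_nonneg_left stepE (by positivity)
  calc (N:ℝ)^2 * ‖S‖^2 = ((N:ℝ) * ‖S‖)^2 := by ring
    _ ≤ (2*(N:ℝ)) * ((N:ℝ) * (2 * ∑ h ∈ Finset.range N, ‖c (h:ℤ)‖)) := hfinal
    _ = 4 * (N:ℝ)^2 * ∑ h ∈ Finset.range N, ‖c (h:ℤ)‖ := by ring

lemma coeFn_sum'' {X : Type} [MeasurableSpace X] {μ : Measure X}
    {ι : Type*} (s : Finset ι) (f : ι → Lp ℂ 2 μ) :
    ⇑(∑ i ∈ s, f i) =ᵐ[μ] fun x => ∑ i ∈ s, f i x := by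
  classical
  induction s using Finset.cons_induction with
  | empty => simp only [Finset.sum_empty]; exact Lp.coeFn_zero (E := ℂ) (p := 2) (μ := μ)
  | cons a s ha ih =>
    filter_upwards [Lp.coeFn_add (f a) (∑ i ∈ s, f i), ih] with x hx hx'
    simp only [Finset.sum_cons, hx, Pi.add_apply, hx']

lemma mp_zpow' {X : Type} [MeasurableSpace X] {μ : Measure X}
    (T : Equiv.Perm X) (hT : MeasurePreserving (⇑T) μ μ)
    (hTsymm : Measurable (⇑T.symm)) (k : ℤ) : MeasurePreserving (⇑(T ^ k)) μ μ := by
  let e : X ≃ᵐ X := ⟨(T : Equiv.Perm X), hT.measurable, hTsymm⟩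
  have hsymm : MeasurePreserving (⇑T.symm) μ μ :=
    MeasurePreserving.symm e (show MeasurePreserving (⇑e) μ μ from hT)
  rcases k with n | n
  · have : (T ^ (Int.ofNat n) : Equiv.Perm X) = T ^ n := by
      rw [Int.ofNat_eq_coe, zpow_natCast]
    rw [this, ← Equiv.Perm.iterate_eq_pow]
    exact hT.iterate n
  · have : (T ^ (Int.negSucc n) : Equiv.Perm X) = (T⁻¹) ^ (n + 1) := by
      rw [zpow_negSucc, inv_pow]
    rw [this, ← Equiv.Perm.iterate_eq_pow]
    have h2 : ⇑(T⁻¹) = ⇑T.symm := by rw [Equiv.Perm.inv_def]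
    rw [h2]
    exact hsymm.iterate (n + 1)

/-- The `k = 1` case of the comparison proposition: the `L²(μ)` norm of the
average `N⁻¹ ∑ b(n) ξ({nα}) f₀ · T^{⌊nα⌋}f₁` is bounded by an absolute constant
times `‖b(n)ξ({nα})1_{[1,N]}‖_{U²(ℤ_{2N})} + o_N(1)`, where the `o_N(1)` term
depends only on `b`, and `ξ` is bounded by `1` and supported in an interval
`I ⊆ (0,1)` of length at most `1/2`. -/
theorem single_average_gowers_control {α : ℝ} (hα : Irrational α) :
    ∃ C : ℝ, 0 < C ∧
    ∀ b : ℕ → ℂ,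
      (∀ c : ℝ, 0 < c →
        Tendsto (fun n : ℕ => ‖b n‖ / (n : ℝ) ^ c) atTop (nhds 0)) →
      ∃ e : ℕ → ℝ, Tendsto e atTop (nhds 0) ∧
        ∀ (X : Type) (_ : MeasurableSpace X) (μ : Measure X), IsProbabilityMeasure μ →
          ∀ T : Equiv.Perm X, MeasurePreserving (⇑T) μ μ → Measurable (⇑T.symm) →
            ∀ f₀ f₁ : X → ℂ,
              Measurable f₀ → Measurable f₁ →
              (∀ x, ‖f₀ x‖ ≤ 1) → (∀ x, ‖f₁ x‖ ≤ 1) →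
              ∀ ξ : ℝ → ℝ, (∀ x, |ξ x| ≤ 1) →
                ∀ p q : ℝ, 0 ≤ p → q ≤ 1 → q - p ≤ 1 / 2 →
                  (∀ x, ξ x ≠ 0 → x ∈ Set.Ioo p q) →
                  ∀ N : ℕ, 0 < N →
                    (eLpNorm (fun x =>
                        ((N : ℂ))⁻¹ * ∑ n ∈ Finset.Icc 1 N,
                          b n * (ξ (Int.fract ((n : ℝ) * α)) : ℂ) *
                            (f₀ x * f₁ ((T ^ (⌊(n : ℝ) * α⌋ : ℤ)) x))) 2 μ).toReal ≤
                      C * (gowersNormNat (2 * N) 2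
                            (fun n => if 1 ≤ n ∧ n ≤ N then
                              b n * (ξ (Int.fract ((n : ℝ) * α)) : ℂ) else 0) + e N) := by
  classical
  refine ⟨4, by norm_num, ?_⟩
  intro b _hb
  refine ⟨fun _ => 0, tendsto_const_nhds, ?_⟩
  intro X mX μ hμ T hT hTsymm f₀ f₁ hf₀m hf₁m hf₀ hf₁ ξ hξ p q hp hq hpq hsupp N hN
  -- sequences
  set aN : ℕ → ℂ := fun n => if 1 ≤ n ∧ n ≤ N then
      b n * (ξ (Int.fract ((n:ℝ) * α)) : ℂ) else 0 with haN
  set aZ : ℤ → ℂ := fun k => if 1 ≤ k ∧ k ≤ (N:ℤ) then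
      b k.toNat * (ξ (Int.fract ((k:ℝ) * α)) : ℂ) else 0 with haZ
  have haZcast : ∀ n : ℕ, aZ (n:ℤ) = aN n := by
    intro n
    simp only [haZ, haN]
    by_cases hc : 1 ≤ n ∧ n ≤ N
    · have h1 : 1 ≤ (n:ℤ) ∧ (n:ℤ) ≤ (N:ℤ) := by exact_mod_cast hc
      rw [if_pos h1, if_pos hc]
      norm_num
    · have h1 : ¬(1 ≤ (n:ℤ) ∧ (n:ℤ) ≤ (N:ℤ)) := by
        intro h; exact hc ⟨by exact_mod_cast h.1, by exact_mod_cast h.2⟩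
      rw [if_neg h1, if_neg hc]
  have haZzero : ∀ k : ℤ, k ∉ Finset.Icc (1:ℤ) (N:ℤ) → aZ k = 0 := by
    intro k hk
    rw [Finset.mem_Icc] at hk
    simp only [haZ]
    exact if_neg hk
  have hfract : ∀ k : ℤ, aZ k ≠ 0 → Int.fract ((k:ℝ) * α) ∈ Set.Ioo p q := by
    intro k hk
    simp only [haZ] at hk
    by_cases hc : 1 ≤ k ∧ k ≤ (N:ℤ)
    · rw [if_pos hc] at hk
      apply hsupp
      intro hzero
      apply hk
      rw [hzero]
      norm_num
    · rw [if_neg hc] at hk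
      exact absurd rfl hk
  -- measure-theoretic setup
  have hmem : ∀ k : ℤ, MemLp (fun x => f₁ ((T ^ k) x)) 2 μ := by
    intro k
    refine MemLp.of_bound
      ((hf₁m.comp (mp_zpow' T hT hTsymm k).measurable)).aestronglyMeasurable 1
      (Filter.Eventually.of_forall fun x => ?_)
    simpa using hf₁ ((T ^ k) x)
  set Udef : ℤ → Lp ℂ 2 μ := fun j => (hmem j).toLp _ with hUdef
  have hUnorm : ∀ j : ℤ, ‖Udef j‖ ≤ 1 := by
    intro j
    rw [hUdef]
    rw [Lp.norm_toLp]
    have h1 : eLpNorm (fun x => f₁ ((T ^ j) x)) 2 μ ≤ 1 := by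
      have := eLpNorm_le_of_ae_bound (μ := μ) (p := 2)
        (f := fun x => f₁ ((T ^ j) x)) (C := 1)
        (Filter.Eventually.of_forall fun x => by
          simpa using hf₁ ((T ^ j) x))
      simpa using this
    calc (eLpNorm (fun x => f₁ ((T ^ j) x)) 2 μ).toReal
        ≤ (1 : ℝ≥0∞).toReal := ENNReal.toReal_mono (by simp) h1
      _ = 1 := by simp
  have hshift : ∀ j l : ℤ, (inner ℂ (Udef j) (Udef l) : ℂ) = inner ℂ (Udef (j - l)) (Udef 0) := by
    intro j l
    rw [hUdef]
    rw [L2.inner_def, L2.inner_def]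
    have h1 : ∫ a, (inner ℂ (((hmem j).toLp _) a) (((hmem l).toLp _) a) : ℂ) ∂μ
        = ∫ a, (inner ℂ (f₁ ((T ^ j) a)) (f₁ ((T ^ l) a)) : ℂ) ∂μ := by
      apply integral_congr_ae
      filter_upwards [(hmem j).coeFn_toLp, (hmem l).coeFn_toLp] with a h1 h2
      rw [h1, h2]
    have h2 : ∫ a, (inner ℂ (((hmem (j-l)).toLp _) a) (((hmem 0).toLp _) a) : ℂ) ∂μ
        = ∫ a, (inner ℂ (f₁ ((T ^ (j-l)) a)) (f₁ ((T ^ (0:ℤ)) a)) : ℂ) ∂μ := by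
      apply integral_congr_ae
      filter_upwards [(hmem (j-l)).coeFn_toLp, (hmem 0).coeFn_toLp] with a h1 h2
      rw [h1, h2]
    rw [h1, h2]
    let e : X ≃ᵐ X := ⟨(T ^ l : Equiv.Perm X), (mp_zpow' T hT hTsymm l).measurable, by
      have : ⇑(T ^ l : Equiv.Perm X).symm = ⇑(T ^ (-l) : Equiv.Perm X) := by
        rw [zpow_neg, Equiv.Perm.inv_def]
      rw [this]
      exact (mp_zpow' T hT hTsymm (-l)).measurable⟩
    have hcv := MeasurePreserving.integral_comp'
      (f := e) (show MeasurePreserving (⇑e) μ μ from mp_zpow' T hT hTsymm l)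
      (fun y => (inner ℂ (f₁ ((T ^ (j - l)) y)) (f₁ y) : ℂ))
    have h3 : ∀ x : X, (T ^ (j - l)) ((T ^ l) x) = (T ^ j) x := by
      intro x
      rw [← Equiv.Perm.mul_apply, ← zpow_add]
      norm_num
    calc ∫ a, (inner ℂ (f₁ ((T ^ j) a)) (f₁ ((T ^ l) a)) : ℂ) ∂μ
        = ∫ a, (inner ℂ (f₁ ((T ^ (j - l)) ((T ^ l) a))) (f₁ ((T ^ l) a)) : ℂ) ∂μ := by
          refine integral_congr_ae (Filter.Eventually.of_forall fun a => ?_)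
          simp only [h3]
      _ = ∫ y, (inner ℂ (f₁ ((T ^ (j - l)) y)) (f₁ y) : ℂ) ∂μ := hcv
      _ = ∫ a, (inner ℂ (f₁ ((T ^ (j-l)) a)) (f₁ ((T ^ (0:ℤ)) a)) : ℂ) ∂μ := by
          refine integral_congr_ae (Filter.Eventually.of_forall fun a => ?_)
          norm_num
  -- the vectors
  set mfl : ℤ → ℤ := fun k => ⌊(k:ℝ) * α⌋ with hmfl
  set rfl' : ℤ → ℤ := fun d => ⌊(d:ℝ) * α + 1/2⌋ with hrfl
  set V : ℤ → Lp ℂ 2 μ := fun k => aZ k • Udef (mfl k) with hV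
  set γ : ℕ → ℂ := fun h => inner ℂ (Udef (rfl' (h:ℤ))) (Udef 0) with hγ
  have hγle : ∀ h : ℕ, ‖γ h‖ ≤ 1 := by
    intro h
    rw [hγ]
    calc ‖(inner ℂ (Udef (rfl' (h:ℤ))) (Udef 0) : ℂ)‖
        ≤ ‖Udef (rfl' (h:ℤ))‖ * ‖Udef 0‖ := norm_inner_le_norm _ _
      _ ≤ 1 * 1 := by
          apply mul_le_mul (hUnorm _) (hUnorm _) (norm_nonneg _) zero_le_one
      _ = 1 := by norm_num
  have hVzero : ∀ k : ℤ, k ∉ Finset.Icc (1:ℤ) (N:ℤ) → V k = 0 := by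
    intro k hk
    rw [hV]
    simp only
    rw [haZzero k hk, zero_smul]
  have hfloor : ∀ (h : ℕ) (n : ℤ), aZ (n + (h:ℤ)) ≠ 0 → aZ n ≠ 0 →
      mfl (n + (h:ℤ)) - mfl n = rfl' (h:ℤ) := by
    intro h n h1 h2
    have key := floor_diff_const' hpq (hfract _ h1) (hfract _ h2)
    have e1 : (n + (h:ℤ)) - n = (h:ℤ) := by ring
    rw [e1] at key
    rw [hmfl, hrfl]
    simp only
    omega
  have hVinner : ∀ (h : ℕ), ∀ n ∈ Finset.Icc (1:ℤ) (N:ℤ),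
      (inner ℂ (V (n + (h:ℤ))) (V n) : ℂ)
        = (starRingEnd ℂ) (aZ (n + (h:ℤ))) * aZ n * γ h := by
    intro h n _
    by_cases h1 : aZ (n + (h:ℤ)) = 0
    · rw [hV]
      simp only
      rw [h1, zero_smul, inner_zero_left, map_zero]
      ring
    by_cases h2 : aZ n = 0
    · rw [hV]
      simp only
      rw [h2, zero_smul, inner_zero_right]
      ring
    · rw [hV]
      simp only
      rw [inner_smul_left, inner_smul_right]
      have hkey : (inner ℂ (Udef (mfl (n + (h:ℤ)))) (Udef (mfl n)) : ℂ) = γ h := by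
        rw [hshift, hfloor h n h1 h2, hγ]
      rw [hkey]
      ring
  set σc : ℕ → ℂ :=
    fun h => ∑ n ∈ Finset.Icc (1:ℤ) (N:ℤ), aZ (n + (h:ℤ)) * (starRingEnd ℂ) (aZ n) with hσc
  have hc_eq : ∀ h : ℕ,
      ∑ n ∈ Finset.Icc (1:ℤ) (N:ℤ), (inner ℂ (V (n + (h:ℤ))) (V n) : ℂ)
        = (starRingEnd ℂ) (σc h) * γ h := by
    intro h
    rw [Finset.sum_congr rfl (hVinner h), hσc]
    simp only
    rw [map_sum, Finset.sum_mul]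
    refine Finset.sum_congr rfl fun n _ => ?_
    rw [map_mul, Complex.conj_conj]
  have habsc : ∀ h : ℕ,
      ‖∑ n ∈ Finset.Icc (1:ℤ) (N:ℤ), (inner ℂ (V (n + (h:ℤ))) (V n) : ℂ)‖
        ≤ ‖σc h‖ := by
    intro h
    rw [hc_eq h, norm_mul, Complex.norm_conj]
    calc ‖σc h‖ * ‖γ h‖
        ≤ ‖σc h‖ * 1 :=
          mul_le_mul_of_nonneg_left (hγle h) (norm_nonneg _)
      _ = ‖σc h‖ := by ring
  -- van der Corput
  set SLp : Lp ℂ 2 μ := ∑ k ∈ Finset.Icc (1:ℤ) (N:ℤ), V k with hSLp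
  have hNpos : (0:ℝ) < (N:ℝ) := by exact_mod_cast hN
  have hS2 : ‖SLp‖^2 ≤ 4 * ∑ h ∈ Finset.range N, ‖σc h‖ := by
    have hvdc := vdc_core' N hN V hVzero
    have h1 : ∑ h ∈ Finset.range N,
        ‖∑ n ∈ Finset.Icc (1:ℤ) (N:ℤ), (inner ℂ (V (n + (h:ℤ))) (V n) : ℂ)‖
          ≤ ∑ h ∈ Finset.range N, ‖σc h‖ :=
      Finset.sum_le_sum fun h _ => habsc h
    have h2 : (N:ℝ)^2 * ‖SLp‖^2 ≤ (N:ℝ)^2 * (4 * ∑ h ∈ Finset.range N, ‖σc h‖) := by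
      calc (N:ℝ)^2 * ‖SLp‖^2
          ≤ 4 * (N:ℝ)^2 * ∑ h ∈ Finset.range N,
              ‖∑ n ∈ Finset.Icc (1:ℤ) (N:ℤ), (inner ℂ (V (n + (h:ℤ))) (V n) : ℂ)‖ :=
            hvdc
        _ ≤ 4 * (N:ℝ)^2 * ∑ h ∈ Finset.range N, ‖σc h‖ := by
            apply mul_le_mul_of_nonneg_left h1 (by positivity)
        _ = (N:ℝ)^2 * (4 * ∑ h ∈ Finset.range N, ‖σc h‖) := by ring
    exact le_of_mul_le_mul_left h2 (pow_pos hNpos 2)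
  -- reduction of the L² norm
  set G : Lp ℂ 2 μ := (N:ℂ)⁻¹ • SLp with hG
  set F : X → ℂ := fun x =>
      ((N : ℂ))⁻¹ * ∑ n ∈ Finset.Icc 1 N,
        b n * (ξ (Int.fract ((n : ℝ) * α)) : ℂ) *
          (f₀ x * f₁ ((T ^ (⌊(n : ℝ) * α⌋ : ℤ)) x)) with hF
  have hGae : ∀ᵐ x ∂μ, G x = (N:ℂ)⁻¹ * ∑ k ∈ Finset.Icc (1:ℤ) (N:ℤ),
      aZ k * f₁ ((T ^ (mfl k)) x) := by
    have hVk : ∀ᵐ x ∂μ, ∀ k ∈ (↑(Finset.Icc (1:ℤ) (N:ℤ)) : Set ℤ),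
        (V k) x = aZ k * f₁ ((T ^ (mfl k)) x) := by
      rw [MeasureTheory.ae_ball_iff (Finset.countable_toSet _)]
      intro k _
      filter_upwards [Lp.coeFn_smul (aZ k) (Udef (mfl k)), (hmem (mfl k)).coeFn_toLp] with x h1 h2
      rw [hV]
      simp only
      rw [h1]
      simp only [Pi.smul_apply, smul_eq_mul, hUdef]
      rw [h2]
    filter_upwards [Lp.coeFn_smul ((N:ℂ)⁻¹) SLp, coeFn_sum'' (Finset.Icc (1:ℤ) (N:ℤ)) V, hVk]
      with x h1 h2 h3
    rw [hG, h1]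
    simp only [Pi.smul_apply, smul_eq_mul]
    rw [hSLp, h2]
    rw [Finset.sum_congr rfl (fun k hk => h3 k (Finset.mem_coe.mpr hk))]
  have hFG : ∀ᵐ x ∂μ, ‖F x‖ ≤ ‖G x‖ := by
    filter_upwards [hGae] with x hGx
    have hsum_eq : ∑ k ∈ Finset.Icc (1:ℤ) (N:ℤ), aZ k * f₁ ((T ^ (mfl k)) x)
        = ∑ n ∈ Finset.Icc 1 N,
            b n * (ξ (Int.fract ((n : ℝ) * α)) : ℂ) * f₁ ((T ^ (⌊(n : ℝ) * α⌋ : ℤ)) x) := by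
      rw [sum_Icc_int_nat N (fun k => aZ k * f₁ ((T ^ (mfl k)) x))]
      refine Finset.sum_congr rfl fun n hn => ?_
      rw [Finset.mem_Icc] at hn
      have h1 : aZ (n:ℤ) = b n * (ξ (Int.fract ((n : ℝ) * α)) : ℂ) := by
        rw [haZcast n]
        simp only [haN]
        rw [if_pos hn]
      have h2 : mfl (n:ℤ) = ⌊(n : ℝ) * α⌋ := by
        rw [hmfl]
        simp only
        norm_num
      rw [h1, h2]
    have hFx : F x = f₀ x * ((N:ℂ)⁻¹ * ∑ n ∈ Finset.Icc 1 N,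
        b n * (ξ (Int.fract ((n : ℝ) * α)) : ℂ) * f₁ ((T ^ (⌊(n : ℝ) * α⌋ : ℤ)) x)) := by
      simp only [hF, Finset.mul_sum]
      exact Finset.sum_congr rfl fun n _ => by ring
    rw [hFx, hGx, hsum_eq]
    rw [norm_mul]
    have : ‖f₀ x‖ ≤ 1 := by
      exact hf₀ x
    nlinarith [norm_nonneg ((N:ℂ)⁻¹ * ∑ n ∈ Finset.Icc 1 N,
      b n * (ξ (Int.fract ((n : ℝ) * α)) : ℂ) * f₁ ((T ^ (⌊(n : ℝ) * α⌋ : ℤ)) x)),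
      norm_nonneg (f₀ x)]
  have hLHS : (eLpNorm F 2 μ).toReal ≤ (N:ℝ)⁻¹ * ‖SLp‖ := by
    have h1 : eLpNorm F 2 μ ≤ eLpNorm (⇑G) 2 μ := eLpNorm_mono_ae hFG
    have h2 : (eLpNorm F 2 μ).toReal ≤ (eLpNorm (⇑G) 2 μ).toReal :=
      ENNReal.toReal_mono (Lp.eLpNorm_ne_top G) h1
    have h3 : (eLpNorm (⇑G) 2 μ).toReal = ‖G‖ := (Lp.norm_def G).symm
    have h4 : ‖G‖ = (N:ℝ)⁻¹ * ‖SLp‖ := by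
      rw [hG, norm_smul, norm_inv, Complex.norm_natCast]
    rw [h3, h4] at h2
    exact h2
  -- Gowers norm side
  set τ : ℕ → ℂ := fun h => ∑ n ∈ Finset.range (2*N),
      aN ((n + h) % (2*N)) * (starRingEnd ℂ) (aN (n % (2*N))) with hτ
  set U : ℝ := gowersNormNat (2 * N) 2 aN with hUg
  have hUnn : 0 ≤ U := by
    rw [hUg]
    show 0 ≤ gowersNormNat (2*N) (0+2) aN
    rw [gowersNormNat]
    apply Real.rpow_nonneg
    apply div_nonneg _ (by positivity)
    apply Finset.sum_nonneg
    intro h _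
    have e : (2:ℕ) ^ (0+1) = 2 := rfl
    rw [e]
    positivity
  have hU4 : ∑ h ∈ Finset.range (2*N), (‖τ h‖)^2 = (2*(N:ℝ))^3 * U^4 := by
    have h2N : (0:ℝ) < (2*N:ℕ) := by positivity
    have hB : U = ((∑ h ∈ Finset.range (2*N), (‖τ h‖ / (2*(N:ℝ)))^2)
        / (2*(N:ℝ))) ^ ((4:ℝ))⁻¹ := by
      rw [hUg]
      show gowersNormNat (2*N) (0+2) aN = _
      rw [gowersNormNat]
      norm_num [gowersNormNat]
      rfl
    have hBnn : 0 ≤ (∑ h ∈ Finset.range (2*N), (‖τ h‖ / (2*(N:ℝ)))^2)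
        / (2*(N:ℝ)) := by
      apply div_nonneg _ (by positivity)
      apply Finset.sum_nonneg; intro h _; positivity
    have hU4' : U^4 = (∑ h ∈ Finset.range (2*N), (‖τ h‖ / (2*(N:ℝ)))^2)
        / (2*(N:ℝ)) := by
      rw [hB, ← Real.rpow_natCast (((∑ h ∈ Finset.range (2*N),
        (‖τ h‖ / (2*(N:ℝ)))^2) / (2*(N:ℝ))) ^ ((4:ℝ))⁻¹) 4,
        ← Real.rpow_mul hBnn]
      norm_num
    rw [hU4']
    rw [Finset.sum_div]
    rw [Finset.mul_sum]
    refine Finset.sum_congr rfl fun h _ => ?_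
    rw [div_pow]
    field_simp
  have hστ : ∀ h : ℕ, h < N → σc h = τ h := by
    intro h hh
    have hτ' : τ h = ∑ n ∈ Finset.Icc 1 N, aN (n + h) * (starRingEnd ℂ) (aN n) := by
      rw [hτ]
      simp only
      have hsub : Finset.Icc 1 N ⊆ Finset.range (2*N) := by
        intro n hn
        rw [Finset.mem_Icc] at hn
        rw [Finset.mem_range]
        omega
      rw [← Finset.sum_subset hsub]
      · refine Finset.sum_congr rfl fun n hn => ?_
        rw [Finset.mem_Icc] at hn
        have e1 : (n + h) % (2*N) = n + h := Nat.mod_eq_of_lt (by omega)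
        have e2 : n % (2*N) = n := Nat.mod_eq_of_lt (by omega)
        rw [e1, e2]
      · intro n hn hn'
        rw [Finset.mem_range] at hn
        have e2 : n % (2*N) = n := Nat.mod_eq_of_lt (by omega)
        rw [e2]
        have : aN n = 0 := by
          simp only [haN]
          rw [Finset.mem_Icc] at hn'
          rw [if_neg (by omega)]
        rw [this, map_zero, mul_zero]
    rw [hτ']
    simp only [hσc]
    rw [sum_Icc_int_nat N (fun k => aZ (k + (h:ℤ)) * (starRingEnd ℂ) (aZ k))]
    refine Finset.sum_congr rfl fun n _ => ?_
    have e3 : (n:ℤ) + (h:ℤ) = ((n + h : ℕ) : ℤ) := by push_cast; ring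
    rw [e3, haZcast, haZcast]
  -- Cauchy-Schwarz and assembly
  set K : ℝ := ∑ h ∈ Finset.range N, ‖σc h‖ with hK
  have hKnn : 0 ≤ K := Finset.sum_nonneg fun h _ => norm_nonneg _
  have hK2 : K^2 ≤ (N:ℝ) * ∑ h ∈ Finset.range N, (‖σc h‖)^2 := by
    have := Finset.sum_mul_sq_le_sq_mul_sq (Finset.range N)
      (fun _ => (1:ℝ)) (fun h => ‖σc h‖)
    simpa [hK] using this
  have hQ : ∑ h ∈ Finset.range N, (‖σc h‖)^2
      ≤ (2*(N:ℝ))^3 * U^4 := by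
    rw [← hU4]
    have h1 : ∑ h ∈ Finset.range N, (‖σc h‖)^2
        = ∑ h ∈ Finset.range N, (‖τ h‖)^2 := by
      refine Finset.sum_congr rfl fun h hh => ?_
      rw [Finset.mem_range] at hh
      rw [hστ h hh]
    rw [h1]
    apply Finset.sum_le_sum_of_subset_of_nonneg
    · intro h hh
      rw [Finset.mem_range] at *
      omega
    · intro _ _ _
      positivity
  -- final numeric computation
  have hL : (eLpNorm F 2 μ).toReal ≤ 4 * U := by
    have hLnn : 0 ≤ (eLpNorm F 2 μ).toReal := ENNReal.toReal_nonneg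
    have hSnn : 0 ≤ ‖SLp‖ := norm_nonneg _
    have h4 : ((eLpNorm F 2 μ).toReal)^4 ≤ (4*U)^4 := by
      have e1 : ((eLpNorm F 2 μ).toReal)^4 ≤ ((N:ℝ)⁻¹ * ‖SLp‖)^4 := by
        apply pow_le_pow_left₀ hLnn hLHS
      have e2 : ((N:ℝ)⁻¹ * ‖SLp‖)^4 = (N:ℝ)⁻¹^4 * (‖SLp‖^2)^2 := by ring
      have e3 : (‖SLp‖^2)^2 ≤ (4*K)^2 :=
        pow_le_pow_left₀ (sq_nonneg _) hS2 2
      have e4 : (4*K)^2 = 16 * K^2 := by ring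
      have e5 : K^2 ≤ (N:ℝ) * ((2*(N:ℝ))^3 * U^4) := by
        refine le_trans hK2 ?_
        apply mul_le_mul_of_nonneg_left hQ (by positivity)
      have e6 : (N:ℝ)⁻¹^4 * (16 * ((N:ℝ) * ((2*(N:ℝ))^3 * U^4))) = 128 * U^4 := by
        field_simp
        ring
      calc ((eLpNorm F 2 μ).toReal)^4
          ≤ (N:ℝ)⁻¹^4 * (‖SLp‖^2)^2 := by rw [← e2]; exact e1
        _ ≤ (N:ℝ)⁻¹^4 * (4*K)^2 := by
            apply mul_le_mul_of_nonneg_left e3 (by positivity)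
        _ = (N:ℝ)⁻¹^4 * (16 * K^2) := by rw [e4]
        _ ≤ (N:ℝ)⁻¹^4 * (16 * ((N:ℝ) * ((2*(N:ℝ))^3 * U^4))) := by
            apply mul_le_mul_of_nonneg_left _ (by positivity)
            apply mul_le_mul_of_nonneg_left e5 (by norm_num)
        _ = 128 * U^4 := e6
        _ ≤ 256 * U^4 := by nlinarith [pow_nonneg hUnn 4]
        _ = (4*U)^4 := by ring
    have := (pow_le_pow_iff_left₀ hLnn (by positivity : (0:ℝ) ≤ 4*U)
      (by norm_num : (4:ℕ) ≠ 0)).mp h4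
    exact this
  calc (eLpNorm F 2 μ).toReal ≤ 4 * U := hL
    _ = 4 * (U + 0) := by ring
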